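/- For every n ≥ 2, the unary language L = (a^n)*(ε + a + ⋯ + a^(n−2)) = {a^m : m mod n ≤ n−2} is accepted by a DFA with n states, is not subword-closed, and its minimal witness is (a^(n−1), a^n); in particular every witness (v, w) satisfies |w| ≥ n. -/

import Mathlib

def SubwordClosed {α : Type*} (L : Set (List α)) : Prop :=
  ∀ w ∈ L, ∀ v : List α, v.Sublist w → v ∈ L

/-- The unary language `(a^n)*(ε + a + ⋯ + a^(n-2)) = {a^m : m mod n ≤ n-2}`. -/
def unaryMod (n : ℕ) : Set (List Unit) := {w : List Unit | w.length % n ≤ n - 2}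

open Fin.NatCast in
lemma unary_evalFrom (n : ℕ) [NeZero n]
    (M : DFA Unit (Fin n)) (hstep : ∀ q a, M.step q a = q + 1) :
    ∀ (w : List Unit) (q : Fin n), M.evalFrom q w = q + (w.length : Fin n) := by
  intro w
  induction w with
  | nil => intro q; simp [DFA.evalFrom]
  | cons a w ih =>
      intro q
      have : M.evalFrom q (a :: w) = M.evalFrom (M.step q a) w := rfl
      rw [this, ih, hstep]
      simp only [List.length_cons, Nat.cast_add, Nat.cast_one]
      rw [add_assoc, add_comm 1]

theorem unary_subwordClosed_lower_bound (n : ℕ) (hn : 2 ≤ n) :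
    (∃ M : DFA Unit (Fin n), ∀ w : List Unit, w ∈ M.accepts ↔ w ∈ unaryMod n) ∧
    ¬ SubwordClosed (unaryMod n) ∧
    (∀ v w : List Unit, v.Sublist w → w ∈ unaryMod n → v ∉ unaryMod n → n ≤ w.length) ∧
    (List.Sublist (List.replicate (n - 1) ()) (List.replicate n ()) ∧
     List.replicate n () ∈ unaryMod n ∧
     List.replicate (n - 1) () ∉ unaryMod n) := by
  haveI : NeZero n := ⟨by omega⟩
  have hwit1 : List.Sublist (List.replicate (n - 1) ()) (List.replicate n ()) := by
    rw [List.replicate_sublist_replicate]; omega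
  have hwit2 : List.replicate n () ∈ unaryMod n := by
    simp [unaryMod, Nat.mod_self]
  have hwit3 : List.replicate (n - 1) () ∉ unaryMod n := by
    simp only [unaryMod, Set.mem_setOf_eq, List.length_replicate, not_le]
    rw [Nat.mod_eq_of_lt (by omega)]; omega
  refine ⟨?_, ?_, ?_, hwit1, hwit2, hwit3⟩
  · refine ⟨⟨fun q _ => q + 1, 0, {q | (q : ℕ) ≤ n - 2}⟩, fun w => ?_⟩
    have := unary_evalFrom n ⟨fun q _ => q + 1, 0, {q | (q : ℕ) ≤ n - 2}⟩
      (fun _ _ => rfl) w 0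
    simp only [DFA.mem_accepts, DFA.eval] at *
    rw [this]
    simp [unaryMod, Fin.val_natCast]
  · intro h
    exact hwit3 (h _ hwit2 _ hwit1)
  · intro v w hsub hw hv
    simp only [unaryMod, Set.mem_setOf_eq, not_le] at hw hv
    by_contra hlt
    push_neg at hlt
    have hvw := hsub.length_le
    rw [Nat.mod_eq_of_lt (by omega)] at hv
    rw [Nat.mod_eq_of_lt (by omega)] at hw
    omega
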